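/- arXiv:1907.07842 — 7 statements merged into one kernel-verified Lean document; each statement's English description precedes it below -/
import Mathlib

section
/- Let ρ, u : ℝ × ℝ → ℝ be twice continuously differentiable and solve the coupled dispersionless system ρ_s + (u²/2)_y = 0 and u_{ys} = ρ u, with ρ(y, s) ≠ 0 for all (y, s). Let x : ℝ × ℝ → ℝ be twice continuously differentiable with ∂x/∂y = ρ and ∂x/∂s = −u²/2. Suppose U : ℝ × ℝ → ℝ is twice continuously differentiable and satisfies U(x(y, s), s) = u(y, s) for all (y, s). Then at every point of the form (x(y, s), s), U satisfies the short pulse equation U_{xt} = U + (1/6)(U³)_{xx}. -/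
private lemma pdFst {g : ℝ → ℝ → ℝ} (hg : Differentiable ℝ (Function.uncurry g)) (a b : ℝ) :
    HasDerivAt (fun y' => g y' b) (fderiv ℝ (Function.uncurry g) (a, b) (1, 0)) a := by
  have h := (hg (a, b)).hasFDerivAt.comp_hasDerivAt a
    ((hasDerivAt_id a).prodMk (hasDerivAt_const a b))
  simpa [Function.comp_def] using h

private lemma pdSnd {g : ℝ → ℝ → ℝ} (hg : Differentiable ℝ (Function.uncurry g)) (a b : ℝ) :
    HasDerivAt (fun s' => g a s') (fderiv ℝ (Function.uncurry g) (a, b) (0, 1)) b := by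
  have h := (hg (a, b)).hasFDerivAt.comp_hasDerivAt b
    ((hasDerivAt_const b a).prodMk (hasDerivAt_id b))
  simpa [Function.comp_def] using h

private lemma clm_pair (L : ℝ × ℝ →L[ℝ] ℝ) (c d : ℝ) :
    L (c, d) = c * L (1, 0) + d * L (0, 1) := by
  have h : ((c, d) : ℝ × ℝ) = c • ((1:ℝ), (0:ℝ)) + d • ((0:ℝ), (1:ℝ)) := by
    simp [Prod.ext_iff]
  rw [h, map_add, map_smul, map_smul, smul_eq_mul, smul_eq_mul]

/-- **Hodograph transformation from the coupled dispersionless system to the short pulse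
equation.** If `(ρ, u)` is a `C²` solution of the CD system `ρ_s + (u²/2)_y = 0`, `u_{ys} = ρu`
with `ρ ≠ 0` everywhere, `x(y,s)` satisfies `x_y = ρ`, `x_s = -u²/2`, and `U` is a `C²` function
with `U(x(y,s), s) = u(y,s)`, then at every point `(x(y,s), s)` the function `U` satisfies the
short pulse equation `U_{xt} = U + (1/6)(U³)_{xx}`. -/
theorem hodograph_CD_to_shortPulse
    (ρ u x U : ℝ → ℝ → ℝ)
    (hρ : ContDiff ℝ 2 (Function.uncurry ρ))
    (hu : ContDiff ℝ 2 (Function.uncurry u))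
    (hx : ContDiff ℝ 2 (Function.uncurry x))
    (hU : ContDiff ℝ 2 (Function.uncurry U))
    (hCD1 : ∀ y s : ℝ, deriv (fun s' => ρ y s') s + deriv (fun y' => (u y' s) ^ 2 / 2) y = 0)
    (hCD2 : ∀ y s : ℝ, deriv (fun s' => deriv (fun y' => u y' s') y) s = ρ y s * u y s)
    (hρ0 : ∀ y s : ℝ, ρ y s ≠ 0)
    (hxy : ∀ y s : ℝ, deriv (fun y' => x y' s) y = ρ y s)
    (hxs : ∀ y s : ℝ, deriv (fun s' => x y s') s = -(u y s) ^ 2 / 2)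
    (hUu : ∀ y s : ℝ, U (x y s) s = u y s) :
    ∀ y s : ℝ,
      deriv (fun t => deriv (fun x' => U x' t) (x y s)) s
        = U (x y s) s
          + (1 / 6) * deriv (fun x' => deriv (fun x'' => (U x'' s) ^ 3) x') (x y s) := by
  intro y s
  have hUd : Differentiable ℝ (Function.uncurry U) := hU.differentiable two_ne_zero
  have hud : Differentiable ℝ (Function.uncurry u) := hu.differentiable two_ne_zero
  have hxd : Differentiable ℝ (Function.uncurry x) := hx.differentiable two_ne_zero
  have hρd : Differentiable ℝ (Function.uncurry ρ) := hρ.differentiable two_ne_zero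
  set V : ℝ × ℝ → ℝ := fun p => fderiv ℝ (Function.uncurry U) p (1, 0) with hVdef
  have hV : ContDiff ℝ 1 V := (hU.fderiv_right (by norm_num)).clm_apply contDiff_const
  have hVd : Differentiable ℝ V := hV.differentiable one_ne_zero
  set a := x y s with ha
  set uv := u y s with huv
  set ρv := ρ y s with hρv'
  set Wv := V (a, s) with hWv
  set K := fderiv ℝ V (a, s) (1, 0) with hK
  set M := fderiv ℝ V (a, s) (0, 1) with hM
  have hρv := hρ0 y s
  -- the inner x-derivative of U is V
  have hInner : ∀ c t : ℝ, deriv (fun x' => U x' t) c = V (c, t) := fun c t =>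
    (pdFst hUd c t).deriv
  -- x-curve derivatives with prescribed values
  have hXy : ∀ b c : ℝ, HasDerivAt (fun y' => x y' c) (ρ b c) b := by
    intro b c
    have h := pdFst hxd b c
    have h2 : fderiv ℝ (Function.uncurry x) (b, c) (1, 0) = ρ b c := by
      rw [← h.deriv, hxy]
    rwa [h2] at h
  have hXs : HasDerivAt (fun s' => x y s') (-(u y s) ^ 2 / 2) s := by
    have h := pdSnd hxd y s
    have h2 : fderiv ℝ (Function.uncurry x) (y, s) (0, 1) = -(u y s) ^ 2 / 2 := by
      rw [← h.deriv, hxs]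
    rwa [h2] at h
  -- (A): u_y = V(x(y,s), s) * ρ
  have hA : ∀ b c : ℝ, deriv (fun y'' => u y'' c) b = V (x b c, c) * ρ b c := by
    intro b c
    have hcurve : HasDerivAt (fun y'' => ((x y'' c : ℝ), c)) ((ρ b c, 0) : ℝ × ℝ) b :=
      (hXy b c).prodMk (hasDerivAt_const b c)
    have hcomp := (hUd (x b c, c)).hasFDerivAt.comp_hasDerivAt b hcurve
    have hcomp' : HasDerivAt (fun y'' => u y'' c)
        (fderiv ℝ (Function.uncurry U) (x b c, c) (ρ b c, 0)) b := by
      simpa only [Function.comp_def, Function.uncurry_apply_pair, hUu] using hcomp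
    rw [hcomp'.deriv, clm_pair]
    simp only [hVdef]
    ring
  -- u_y as a function of s is differentiable
  have hPdiff : DifferentiableAt ℝ (fun s' => deriv (fun y'' => u y'' s') y) s := by
    have hfun : (fun s' => deriv (fun y'' => u y'' s') y)
        = fun s' => fderiv ℝ (Function.uncurry u) (y, s') (1, 0) := by
      funext s'
      exact (pdFst hud y s').deriv
    rw [hfun]
    have hVu : ContDiff ℝ 1 (fun p : ℝ × ℝ => fderiv ℝ (Function.uncurry u) p (1, 0)) :=
      (hu.fderiv_right (by norm_num)).clm_apply contDiff_const
    have h := ((hVu.differentiable one_ne_zero) (y, s)).comp s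
      ((differentiableAt_const y).prodMk differentiableAt_id)
    simpa [Function.comp_def] using h
  set Q := deriv (fun y' => u y' s) y with hQdef
  have hP : HasDerivAt (fun s' => deriv (fun y'' => u y'' s') y) (ρv * uv) s := by
    have h := hPdiff.hasDerivAt
    rwa [hCD2 y s] at h
  have hρdiff : DifferentiableAt ℝ (fun s' => ρ y s') s := (pdSnd hρd y s).differentiableAt
  set Ds := deriv (fun s' => ρ y s') s with hDsdef
  have hRs : HasDerivAt (fun s' => ρ y s') Ds s := hρdiff.hasDerivAt
  have hQ : HasDerivAt (fun y' => u y' s) Q y := ((pdFst hud y s).differentiableAt).hasDerivAt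
  have hDs : Ds = -(uv * Q) := by
    have hsq : deriv (fun y' => (u y' s) ^ 2 / 2) y = uv * Q := by
      rw [((hQ.fun_pow 2).div_const 2).deriv]
      push_cast
      ring
    have h := hCD1 y s
    rw [hsq] at h
    linarith
  -- quotient rule for u_y / ρ in s
  have hdivD : HasDerivAt (fun s' => deriv (fun y'' => u y'' s') y / ρ y s')
      ((ρv * uv * ρv - Q * Ds) / ρv ^ 2) s := hP.div hRs hρv
  -- V along the curve equals u_y / ρ
  have hfun2 : (fun s' => V (x y s', s')) = fun s' => deriv (fun y'' => u y'' s') y / ρ y s' := by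
    funext s'
    rw [hA y s', mul_div_assoc, div_self (hρ0 y s'), mul_one]
  -- chain rule for V along the curve
  have hVcurve : HasDerivAt (fun s' => V (x y s', s'))
      (fderiv ℝ V (a, s) (-(u y s) ^ 2 / 2, 1)) s := by
    have hc : HasDerivAt (fun s' => ((x y s' : ℝ), s')) ((-(u y s) ^ 2 / 2, 1) : ℝ × ℝ) s :=
      hXs.prodMk (hasDerivAt_id s)
    have h := ((hVd (x y s, s)).hasFDerivAt).comp_hasDerivAt_of_eq s hc rfl
    simpa [Function.comp_def] using h
  have hKey : -(uv) ^ 2 / 2 * K + M = (ρv * uv * ρv - Q * Ds) / ρv ^ 2 := by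
    rw [hfun2] at hVcurve
    have h2 := hVcurve.unique hdivD
    rw [clm_pair] at h2
    linarith
  -- the LHS of the goal equals M
  have hVx : HasDerivAt (fun x' => V (x', s)) K a := by
    have h := (hVd (a, s)).hasFDerivAt.comp_hasDerivAt a
      ((hasDerivAt_id a).prodMk (hasDerivAt_const a s))
    simpa [Function.comp_def] using h
  have hLHS : deriv (fun t => deriv (fun x' => U x' t) a) s = M := by
    have hfun : (fun t => deriv (fun x' => U x' t) a) = fun t => V (a, t) := by
      funext t
      exact hInner a t
    rw [hfun]
    have h := (hVd (a, s)).hasFDerivAt.comp_hasDerivAt s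
      ((hasDerivAt_const s a).prodMk (hasDerivAt_id s))
    have h' : HasDerivAt (fun t => V (a, t)) M s := by
      simpa [Function.comp_def] using h
    exact h'.deriv
  -- the RHS second derivative
  have hUa : HasDerivAt (fun x' => U x' s) Wv a := pdFst hUd a s
  have hRHSinner : (fun x' => deriv (fun x'' => (U x'' s) ^ 3) x')
      = fun x' => 3 * (U x' s) ^ 2 * V (x', s) := by
    funext c
    rw [((pdFst hUd c s).fun_pow 3).deriv]
    simp only [hVdef]
    push_cast
    ring
  have hRHS : deriv (fun x' => deriv (fun x'' => (U x'' s) ^ 3) x') a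
      = 6 * uv * Wv ^ 2 + 3 * uv ^ 2 * K := by
    rw [hRHSinner]
    have h2 : HasDerivAt (fun x' => 3 * (U x' s) ^ 2) (3 * (2 * U a s ^ 1 * Wv)) a :=
      (hUa.pow 2).const_mul 3
    have h4 := h2.fun_mul hVx
    rw [h4.deriv]
    have hU1 : U a s = uv := hUu y s
    rw [hU1]
    ring
  -- final algebra
  have hQW : Q = Wv * ρv := hA y s
  have hM' : M = uv + uv * Wv ^ 2 + uv ^ 2 / 2 * K := by
    rw [hDs, hQW] at hKey
    have hx2 : (ρv * uv * ρv - Wv * ρv * -(uv * (Wv * ρv))) / ρv ^ 2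
        = uv + uv * Wv ^ 2 := by
      field_simp [show ρv ≠ 0 from hρv]
      ring
    rw [hx2] at hKey
    linarith
  rw [hLHS, hRHS, hUu y s, hM']
  ring
end

section
/- Let z : ℝ × ℝ → ℝ be three times continuously differentiable and solve the sine-Gordon equation z_{ys} = sin z, with cos z(y, s) ≠ 0 for all (y, s). Let x : ℝ × ℝ → ℝ be twice continuously differentiable with ∂x/∂y = cos z and ∂x/∂s = −(z_s)²/2. Suppose U : ℝ × ℝ → ℝ is twice continuously differentiable and satisfies U(x(y, s), s) = z_s(y, s) for all (y, s). Then at every point of the form (x(y, s), s), U satisfies the short pulse equation U_{xt} = U + (1/6)(U³)_{xx}. -/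
private lemma hasDerivAt_fst' (f : ℝ × ℝ → ℝ) {a b : ℝ} (hf : DifferentiableAt ℝ f (a, b)) :
    HasDerivAt (fun y => f (y, b)) (fderiv ℝ f (a, b) (1, 0)) a :=
  hf.hasFDerivAt.comp_hasDerivAt a (HasDerivAt.prodMk (hasDerivAt_id a) (hasDerivAt_const a b))

private lemma hasDerivAt_snd' (f : ℝ × ℝ → ℝ) {a b : ℝ} (hf : DifferentiableAt ℝ f (a, b)) :
    HasDerivAt (fun s => f (a, s)) (fderiv ℝ f (a, b) (0, 1)) b :=
  hf.hasFDerivAt.comp_hasDerivAt b (HasDerivAt.prodMk (hasDerivAt_const b a) (hasDerivAt_id b))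

private lemma hasDerivAt_curve' (f : ℝ × ℝ → ℝ) {c : ℝ → ℝ} {s c' : ℝ}
    (hf : DifferentiableAt ℝ f (c s, s)) (hc : HasDerivAt c c' s) :
    HasDerivAt (fun t => f (c t, t))
      (c' * fderiv ℝ f (c s, s) (1, 0) + fderiv ℝ f (c s, s) (0, 1)) s := by
  have hg : HasDerivAt (fun t : ℝ => ((c t, t) : ℝ × ℝ)) (c', 1) s :=
    HasDerivAt.prodMk hc (hasDerivAt_id s)
  have h : HasDerivAt (fun t => f (c t, t)) (fderiv ℝ f (c s, s) (c', 1)) s :=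
    HasFDerivAt.comp_hasDerivAt s hf.hasFDerivAt hg
  convert h using 1
  have h2 : ((c', 1) : ℝ × ℝ) = c' • ((1, 0) : ℝ × ℝ) + ((0, 1) : ℝ × ℝ) := by
    simp [Prod.ext_iff]
  rw [h2, map_add, map_smul, smul_eq_mul]

private lemma hasDerivAt_curve1' (f : ℝ × ℝ → ℝ) {c : ℝ → ℝ} (s : ℝ) {y c' : ℝ}
    (hf : DifferentiableAt ℝ f (c y, s)) (hc : HasDerivAt c c' y) :
    HasDerivAt (fun y' => f (c y', s)) (c' * fderiv ℝ f (c y, s) (1, 0)) y := by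
  have hg : HasDerivAt (fun y' : ℝ => ((c y', s) : ℝ × ℝ)) (c', 0) y :=
    HasDerivAt.prodMk hc (hasDerivAt_const y s)
  have h : HasDerivAt (fun y' => f (c y', s)) (fderiv ℝ f (c y, s) (c', 0)) y :=
    HasFDerivAt.comp_hasDerivAt y hf.hasFDerivAt hg
  convert h using 1
  have h2 : ((c', 0) : ℝ × ℝ) = c' • ((1, 0) : ℝ × ℝ) := by simp
  rw [h2, map_smul, smul_eq_mul]

private lemma fderiv_eval' (f : ℝ × ℝ → ℝ) (v w : ℝ × ℝ) (p : ℝ × ℝ)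
    (hf : DifferentiableAt ℝ (fderiv ℝ f) p) :
    fderiv ℝ (fun q => fderiv ℝ f q v) p w = fderiv ℝ (fderiv ℝ f) p w v := by
  rw [fderiv_clm_apply hf (differentiableAt_const v)]
  simp

/-- **Hodograph transformation from the sine-Gordon equation to the short pulse equation.**
If `z` is a `C³` solution of `z_{ys} = sin z` with `cos z ≠ 0` everywhere, `x(y,s)` satisfies
`x_y = cos z`, `x_s = -(z_s)²/2`, and `U` is a `C²` function with `U(x(y,s), s) = z_s(y,s)`,
then at every point `(x(y,s), s)` the function `U` satisfies the short pulse equation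
`U_{xt} = U + (1/6)(U³)_{xx}`. -/
theorem hodograph_sineGordon_to_shortPulse
    (z x U : ℝ → ℝ → ℝ)
    (hz : ContDiff ℝ 3 (Function.uncurry z))
    (hx : ContDiff ℝ 2 (Function.uncurry x))
    (hU : ContDiff ℝ 2 (Function.uncurry U))
    (hSG : ∀ y s : ℝ, deriv (fun s' => deriv (fun y' => z y' s') y) s = Real.sin (z y s))
    (hcos : ∀ y s : ℝ, Real.cos (z y s) ≠ 0)
    (hxy : ∀ y s : ℝ, deriv (fun y' => x y' s) y = Real.cos (z y s))
    (hxs : ∀ y s : ℝ, deriv (fun s' => x y s') s = -(deriv (fun s' => z y s') s) ^ 2 / 2)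
    (hUz : ∀ y s : ℝ, U (x y s) s = deriv (fun s' => z y s') s) :
    ∀ y s : ℝ,
      deriv (fun t => deriv (fun x' => U x' t) (x y s)) s
        = U (x y s) s
          + (1 / 6) * deriv (fun x' => deriv (fun x'' => (U x'' s) ^ 3) x') (x y s) := by
  intro y s
  have hFd : Differentiable ℝ (Function.uncurry z) := hz.differentiable (by norm_num)
  have hXd : Differentiable ℝ (Function.uncurry x) := hx.differentiable (by norm_num)
  have hGd : Differentiable ℝ (Function.uncurry U) := hU.differentiable (by norm_num)
  have hFyC : ContDiff ℝ 2 (fun p : ℝ × ℝ => fderiv ℝ (Function.uncurry z) p (1, 0)) :=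
    (hz.fderiv_right (by norm_num)).clm_apply contDiff_const
  have hFsC : ContDiff ℝ 2 (fun p : ℝ × ℝ => fderiv ℝ (Function.uncurry z) p (0, 1)) :=
    (hz.fderiv_right (by norm_num)).clm_apply contDiff_const
  have hFyd : Differentiable ℝ (fun p : ℝ × ℝ => fderiv ℝ (Function.uncurry z) p (1, 0)) :=
    hFyC.differentiable (by norm_num)
  have hFsd : Differentiable ℝ (fun p : ℝ × ℝ => fderiv ℝ (Function.uncurry z) p (0, 1)) :=
    hFsC.differentiable (by norm_num)
  have hUxC : ContDiff ℝ 1 (fun p : ℝ × ℝ => fderiv ℝ (Function.uncurry U) p (1, 0)) :=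
    (hU.fderiv_right (by norm_num)).clm_apply contDiff_const
  have hUxd : Differentiable ℝ (fun p : ℝ × ℝ => fderiv ℝ (Function.uncurry U) p (1, 0)) :=
    hUxC.differentiable (by norm_num)
  -- conversions between `deriv` hypotheses and partial `fderiv`s
  have hzs : ∀ a b : ℝ, deriv (fun s' => z a s') b
      = fderiv ℝ (Function.uncurry z) (a, b) (0, 1) := fun a b =>
    (hasDerivAt_snd' (Function.uncurry z) (hFd _)).deriv
  have hzy : ∀ a b : ℝ, deriv (fun y' => z y' b) a
      = fderiv ℝ (Function.uncurry z) (a, b) (1, 0) := fun a b =>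
    (hasDerivAt_fst' (Function.uncurry z) (hFd _)).deriv
  have hXy : ∀ a b : ℝ, fderiv ℝ (Function.uncurry x) (a, b) (1, 0) = Real.cos (z a b) := by
    intro a b
    rw [← hxy a b]
    exact ((hasDerivAt_fst' (Function.uncurry x) (hXd _)).deriv).symm
  have hXs : ∀ a b : ℝ, fderiv ℝ (Function.uncurry x) (a, b) (0, 1)
      = -(fderiv ℝ (Function.uncurry z) (a, b) (0, 1)) ^ 2 / 2 := by
    intro a b
    rw [← hzs a b, ← hxs a b]
    exact ((hasDerivAt_snd' (Function.uncurry x) (hXd _)).deriv).symm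
  have hGz : ∀ a b : ℝ, Function.uncurry U (x a b, b)
      = fderiv ℝ (Function.uncurry z) (a, b) (0, 1) := by
    intro a b
    rw [← hzs a b]
    exact hUz a b
  -- symmetry of second derivatives of z
  have hsym : ∀ p : ℝ × ℝ,
      fderiv ℝ (fun q : ℝ × ℝ => fderiv ℝ (Function.uncurry z) q (0, 1)) p (1, 0)
        = fderiv ℝ (fun q : ℝ × ℝ => fderiv ℝ (Function.uncurry z) q (1, 0)) p (0, 1) := by
    intro p
    have hd : DifferentiableAt ℝ (fderiv ℝ (Function.uncurry z)) p :=
      ((hz.fderiv_right (m := 2) (by norm_num)).differentiable (by norm_num)) p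
    rw [fderiv_eval' (Function.uncurry z) (0, 1) (1, 0) p hd,
        fderiv_eval' (Function.uncurry z) (1, 0) (0, 1) p hd]
    exact second_derivative_symmetric (f := Function.uncurry z) (x := p)
      (f' := fderiv ℝ (Function.uncurry z)) (f'' := fderiv ℝ (fderiv ℝ (Function.uncurry z)) p)
      (fun q => (hFd q).hasFDerivAt) hd.hasFDerivAt _ _
  -- mixed second derivative z_{sy} = sin z
  have hmix : ∀ a b : ℝ,
      fderiv ℝ (fun q : ℝ × ℝ => fderiv ℝ (Function.uncurry z) q (0, 1)) (a, b) (1, 0)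
        = Real.sin (z a b) := by
    intro a b
    rw [hsym (a, b)]
    have h1 : (fun s' => deriv (fun y' => z y' s') a)
        = fun s' => fderiv ℝ (Function.uncurry z) (a, s') (1, 0) :=
      funext fun s' => hzy a s'
    have h2 := hSG a b
    rw [h1] at h2
    rw [← h2]
    exact ((hasDerivAt_snd'
      (fun p : ℝ × ℝ => fderiv ℝ (Function.uncurry z) p (1, 0)) (hFyd _)).deriv).symm
  -- the y-derivative of x(·,s)
  have hcx : ∀ a b : ℝ, HasDerivAt (fun y' => x y' b) (Real.cos (z a b)) a := by
    intro a b
    have h := hasDerivAt_fst' (Function.uncurry x) (hXd (a, b))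
    rwa [hXy a b] at h
  -- relation (A):  U_x(x(a,b),b) = tan z(a,b)
  have hA : ∀ a b : ℝ, fderiv ℝ (Function.uncurry U) (x a b, b) (1, 0)
      = Real.sin (z a b) / Real.cos (z a b) := by
    intro a b
    have hL : HasDerivAt (fun y' => Function.uncurry U (x y' b, b))
        (Real.cos (z a b) * fderiv ℝ (Function.uncurry U) (x a b, b) (1, 0)) a :=
      hasDerivAt_curve1' (Function.uncurry U) b (hGd _) (hcx a b)
    have hR : HasDerivAt (fun y' => fderiv ℝ (Function.uncurry z) (y', b) (0, 1))
        (fderiv ℝ (fun q : ℝ × ℝ => fderiv ℝ (Function.uncurry z) q (0, 1)) (a, b) (1, 0)) a :=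
      hasDerivAt_fst' (fun q : ℝ × ℝ => fderiv ℝ (Function.uncurry z) q (0, 1)) (hFsd _)
    have heq : (fun y' => Function.uncurry U (x y' b, b))
        = fun y' => fderiv ℝ (Function.uncurry z) (y', b) (0, 1) :=
      funext fun y' => hGz y' b
    rw [heq] at hL
    have hu := hL.unique hR
    rw [hmix a b] at hu
    rw [eq_div_iff (hcos a b)]
    linear_combination hu
  -- derivative of z(·,b) and z(a,·)
  have hza : ∀ a b : ℝ, HasDerivAt (fun y' => z y' b)
      (fderiv ℝ (Function.uncurry z) (a, b) (1, 0)) a := fun a b =>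
    hasDerivAt_fst' (Function.uncurry z) (hFd _)
  have hzb : ∀ a b : ℝ, HasDerivAt (fun t => z a t)
      (fderiv ℝ (Function.uncurry z) (a, b) (0, 1)) b := fun a b =>
    hasDerivAt_snd' (Function.uncurry z) (hFd _)
  -- (C): U_{xx} at the point
  have hUxx : ∀ a b : ℝ,
      fderiv ℝ (fun p : ℝ × ℝ => fderiv ℝ (Function.uncurry U) p (1, 0)) (x a b, b) (1, 0)
        = fderiv ℝ (Function.uncurry z) (a, b) (1, 0) / Real.cos (z a b) ^ 3 := by
    intro a b
    have hL : HasDerivAt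
        (fun y' => (fun p : ℝ × ℝ => fderiv ℝ (Function.uncurry U) p (1, 0)) (x y' b, b))
        (Real.cos (z a b) *
          fderiv ℝ (fun p : ℝ × ℝ => fderiv ℝ (Function.uncurry U) p (1, 0)) (x a b, b) (1, 0)) a :=
      hasDerivAt_curve1' (fun p : ℝ × ℝ => fderiv ℝ (Function.uncurry U) p (1, 0)) b
        (hUxd _) (hcx a b)
    have hR : HasDerivAt (fun y' => Real.sin (z y' b) / Real.cos (z y' b))
        ((Real.cos (z a b) * fderiv ℝ (Function.uncurry z) (a, b) (1, 0) * Real.cos (z a b)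
          - Real.sin (z a b) * (-Real.sin (z a b) * fderiv ℝ (Function.uncurry z) (a, b) (1, 0)))
            / Real.cos (z a b) ^ 2) a :=
      ((hza a b).sin).div ((hza a b).cos) (hcos a b)
    have heq : (fun y' => (fun p : ℝ × ℝ => fderiv ℝ (Function.uncurry U) p (1, 0)) (x y' b, b))
        = fun y' => Real.sin (z y' b) / Real.cos (z y' b) :=
      funext fun y' => hA y' b
    rw [heq] at hL
    have hu := hL.unique hR
    have hpy := Real.sin_sq_add_cos_sq (z a b)
    have hc2 : Real.cos (z a b) ^ 2 ≠ 0 := pow_ne_zero 2 (hcos a b)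
    rw [eq_div_iff (pow_ne_zero 3 (hcos a b))]
    rw [eq_div_iff hc2] at hu
    linear_combination hu + fderiv ℝ (Function.uncurry z) (a, b) (1, 0) * hpy
  -- the s-derivative of x(a,·)
  have hcs : ∀ a b : ℝ, HasDerivAt (fun t => x a t)
      (-(fderiv ℝ (Function.uncurry z) (a, b) (0, 1)) ^ 2 / 2) b := by
    intro a b
    have h := hasDerivAt_snd' (Function.uncurry x) (hXd (a, b))
    rwa [hXs a b] at h
  -- (D): s-derivative of the relation U_x = tan z along the curve
  have hD : ∀ a b : ℝ,
      (-(fderiv ℝ (Function.uncurry z) (a, b) (0, 1)) ^ 2 / 2) *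
        fderiv ℝ (fun p : ℝ × ℝ => fderiv ℝ (Function.uncurry U) p (1, 0)) (x a b, b) (1, 0)
      + fderiv ℝ (fun p : ℝ × ℝ => fderiv ℝ (Function.uncurry U) p (1, 0)) (x a b, b) (0, 1)
      = (Real.cos (z a b) * fderiv ℝ (Function.uncurry z) (a, b) (0, 1) * Real.cos (z a b)
          - Real.sin (z a b) * (-Real.sin (z a b) * fderiv ℝ (Function.uncurry z) (a, b) (0, 1)))
            / Real.cos (z a b) ^ 2 := by
    intro a b
    have hL : HasDerivAt
        (fun t => (fun p : ℝ × ℝ => fderiv ℝ (Function.uncurry U) p (1, 0)) (x a t, t))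
        ((-(fderiv ℝ (Function.uncurry z) (a, b) (0, 1)) ^ 2 / 2) *
          fderiv ℝ (fun p : ℝ × ℝ => fderiv ℝ (Function.uncurry U) p (1, 0)) (x a b, b) (1, 0)
        + fderiv ℝ (fun p : ℝ × ℝ => fderiv ℝ (Function.uncurry U) p (1, 0)) (x a b, b) (0, 1)) b :=
      hasDerivAt_curve' (fun p : ℝ × ℝ => fderiv ℝ (Function.uncurry U) p (1, 0))
        (hUxd _) (hcs a b)
    have hR : HasDerivAt (fun t => Real.sin (z a t) / Real.cos (z a t))
        ((Real.cos (z a b) * fderiv ℝ (Function.uncurry z) (a, b) (0, 1) * Real.cos (z a b)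
          - Real.sin (z a b) * (-Real.sin (z a b) * fderiv ℝ (Function.uncurry z) (a, b) (0, 1)))
            / Real.cos (z a b) ^ 2) b :=
      ((hzb a b).sin).div ((hzb a b).cos) (hcos a b)
    have heq : (fun t => (fun p : ℝ × ℝ => fderiv ℝ (Function.uncurry U) p (1, 0)) (x a t, t))
        = fun t => Real.sin (z a t) / Real.cos (z a t) :=
      funext fun t => hA a t
    rw [heq] at hL
    exact hL.unique hR
  -- rewrite the LHS of the goal
  have hL1 : (fun t => deriv (fun x' => U x' t) (x y s))
      = fun t => fderiv ℝ (Function.uncurry U) (x y s, t) (1, 0) :=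
    funext fun t => (hasDerivAt_fst' (Function.uncurry U) (hGd (x y s, t))).deriv
  have hL2 : deriv (fun t => fderiv ℝ (Function.uncurry U) (x y s, t) (1, 0)) s
      = fderiv ℝ (fun p : ℝ × ℝ => fderiv ℝ (Function.uncurry U) p (1, 0)) (x y s, s) (0, 1) :=
    (hasDerivAt_snd' (fun p : ℝ × ℝ => fderiv ℝ (Function.uncurry U) p (1, 0)) (hUxd _)).deriv
  rw [hL1, hL2]
  -- rewrite the RHS inner derivative
  have hin : (fun x' => deriv (fun x'' => (U x'' s) ^ 3) x')
      = fun x' => 3 * Function.uncurry U (x', s) ^ 2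
          * fderiv ℝ (Function.uncurry U) (x', s) (1, 0) := by
    funext x'
    have h1 : HasDerivAt (fun x'' => Function.uncurry U (x'', s))
        (fderiv ℝ (Function.uncurry U) (x', s) (1, 0)) x' :=
      hasDerivAt_fst' (Function.uncurry U) (hGd _)
    have h2 := (h1.fun_pow 3).deriv
    simpa using h2
  rw [hin]
  have h1 : HasDerivAt (fun x' => Function.uncurry U (x', s))
      (fderiv ℝ (Function.uncurry U) (x y s, s) (1, 0)) (x y s) :=
    hasDerivAt_fst' (Function.uncurry U) (hGd _)
  have h2 : HasDerivAt (fun x' => fderiv ℝ (Function.uncurry U) (x', s) (1, 0))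
      (fderiv ℝ (fun p : ℝ × ℝ => fderiv ℝ (Function.uncurry U) p (1, 0)) (x y s, s) (1, 0))
      (x y s) :=
    hasDerivAt_fst' (fun p : ℝ × ℝ => fderiv ℝ (Function.uncurry U) p (1, 0)) (hUxd _)
  have h3 := (((h1.fun_pow 2).const_mul (3 : ℝ)).fun_mul h2).deriv
  rw [h3]
  -- final algebra
  have hG0 : Function.uncurry U (x y s, s) = fderiv ℝ (Function.uncurry z) (y, s) (0, 1) :=
    hGz y s
  have hU0 : U (x y s) s = fderiv ℝ (Function.uncurry z) (y, s) (0, 1) := by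
    rw [hUz y s]; exact hzs y s
  rw [hG0, hU0, hUxx y s, hA y s]
  have hd := hD y s
  rw [hUxx y s] at hd
  have hpy := Real.sin_sq_add_cos_sq (z y s)
  set c := Real.cos (z y s)
  set n := Real.sin (z y s)
  set v := fderiv ℝ (Function.uncurry z) (y, s) (0, 1)
  set w := fderiv ℝ (Function.uncurry z) (y, s) (1, 0)
  have hc0 : c ≠ 0 := hcos y s
  field_simp at hd ⊢
  linear_combination 3 * hd
end

section
/- Let u : ℝ × ℝ → ℝ be a smooth (C³) function, L-periodic in x for some L > 0, satisfying the short pulse equation u_{xt} = u + (1/6)(u³)_{xx} for all (x, t). Then the invariant E_0 = ∫_0^L u(x, t)² dx is independent of t. -/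
open MeasureTheory Metric Set

/-- **Conservation of `E₀ = ∫ u² dx` for the short pulse equation.**
If `u` is `C³`, `L`-periodic in `x`, and solves `u_{xt} = u + (1/6)(u³)_{xx}`,
then `∫_0^L u(x,t)² dx` does not depend on `t`. -/
theorem shortPulse_E0_conserved
    (u : ℝ → ℝ → ℝ) (L : ℝ) (hL : 0 < L)
    (hu : ContDiff ℝ 3 (Function.uncurry u))
    (hper : ∀ x t : ℝ, u (x + L) t = u x t)
    (heq : ∀ x t : ℝ, deriv (fun t' => deriv (fun x' => u x' t') x) t
      = u x t + (1 / 6) * deriv (fun x' => deriv (fun x'' => (u x'' t) ^ 3) x') x) :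
    ∀ t₁ t₂ : ℝ,
      (∫ x in (0:ℝ)..L, (u x t₁) ^ 2) = ∫ x in (0:ℝ)..L, (u x t₂) ^ 2 := by
  have hud : Differentiable ℝ (Function.uncurry u) := hu.differentiable (by norm_num)
  have h2 : ContDiff ℝ 2 (fderiv ℝ (Function.uncurry u)) := hu.fderiv_right (by norm_num)
  have h2d : Differentiable ℝ (fderiv ℝ (Function.uncurry u)) := h2.differentiable (by norm_num)
  set f := Function.uncurry u with hf_def
  set A : ℝ → ℝ → ℝ := fun x t => fderiv ℝ f (x, t) (1, 0) with hA_def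
  set B : ℝ → ℝ → ℝ := fun x t => fderiv ℝ f (x, t) (0, 1) with hB_def
  have hlineX : ∀ (x t : ℝ), HasDerivAt (fun x' : ℝ => (x', t)) ((1:ℝ), (0:ℝ)) x :=
    fun x t => (hasDerivAt_id x).prodMk (hasDerivAt_const x t)
  have hlineT : ∀ (x t : ℝ), HasDerivAt (fun t' : ℝ => (x, t')) ((0:ℝ), (1:ℝ)) t :=
    fun x t => (hasDerivAt_const t x).prodMk (hasDerivAt_id t)
  have hX : ∀ x t, HasDerivAt (fun x' => u x' t) (A x t) x := fun x t =>
    by have := (hud (x, t)).hasFDerivAt.comp_hasDerivAt x (hlineX x t); exact this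
  have hT : ∀ x t, HasDerivAt (fun t' => u x t') (B x t) t := fun x t =>
    by have := (hud (x, t)).hasFDerivAt.comp_hasDerivAt t (hlineT x t); exact this
  have hAt : ∀ x t, HasDerivAt (fun t' => A x t')
      (fderiv ℝ (fderiv ℝ f) (x, t) (0, 1) (1, 0)) t := fun x t =>
    (ContinuousLinearMap.apply ℝ ℝ ((1:ℝ), (0:ℝ))).hasFDerivAt.comp_hasDerivAt t
      ((h2d (x, t)).hasFDerivAt.comp_hasDerivAt t (hlineT x t))
  have hAx : ∀ x t, HasDerivAt (fun x' => A x' t)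
      (fderiv ℝ (fderiv ℝ f) (x, t) (1, 0) (1, 0)) x := fun x t =>
    (ContinuousLinearMap.apply ℝ ℝ ((1:ℝ), (0:ℝ))).hasFDerivAt.comp_hasDerivAt x
      ((h2d (x, t)).hasFDerivAt.comp_hasDerivAt x (hlineX x t))
  have hBx : ∀ x t, HasDerivAt (fun x' => B x' t)
      (fderiv ℝ (fderiv ℝ f) (x, t) (1, 0) (0, 1)) x := fun x t =>
    (ContinuousLinearMap.apply ℝ ℝ ((0:ℝ), (1:ℝ))).hasFDerivAt.comp_hasDerivAt x
      ((h2d (x, t)).hasFDerivAt.comp_hasDerivAt x (hlineX x t))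
  have hsymm : ∀ x t : ℝ, fderiv ℝ (fderiv ℝ f) (x, t) (0, 1) (1, 0)
      = fderiv ℝ (fderiv ℝ f) (x, t) (1, 0) (0, 1) := fun x t =>
    second_derivative_symmetric (fun y => (hud y).hasFDerivAt)
      ((h2d (x, t)).hasFDerivAt) _ _
  -- the x-derivative of u³
  set W : ℝ → ℝ → ℝ := fun t x => (3:ℝ) * u x t ^ 2 * A x t with hW_def
  have hWx : ∀ t x, HasDerivAt (fun x'' => u x'' t ^ 3) (W t x) x := by
    intro t x
    have h := (hX x t).pow 3
    have hv : ((3:ℕ):ℝ) * u x t ^ (3-1) * A x t = W t x := by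
      simp only [hW_def]; push_cast; ring
    rw [← hv]; exact h
  have hWdiff : ∀ t, Differentiable ℝ (W t) := by
    intro t
    have hu1 : Differentiable ℝ (fun x => u x t) := fun x => (hX x t).differentiableAt
    have hA1 : Differentiable ℝ (fun x => A x t) := fun x => (hAx x t).differentiableAt
    simp only [hW_def]
    exact ((hu1.pow 2).const_mul 3).mul hA1
  -- the PDE, rewritten
  have hkey : ∀ x t : ℝ, fderiv ℝ (fderiv ℝ f) (x, t) (0, 1) (1, 0)
      = u x t + (1 / 6) * deriv (W t) x := by
    intro x t
    have e1 : (fun t' => deriv (fun x' => u x' t') x) = fun t' => A x t' := by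
      funext t'; exact (hX x t').deriv
    have e2 : (fun x' => deriv (fun x'' => (u x'' t) ^ 3) x') = W t := by
      funext x'; exact (hWx t x').deriv
    have h := heq x t
    rw [e1, e2, (hAt x t).deriv] at h
    exact h
  -- periodicity of the derivatives
  have hTper : ∀ x t, B (x + L) t = B x t := by
    intro x t
    have h1 : HasDerivAt (fun t' => u x t') (B (x + L) t) t := by
      have h := hT (x + L) t
      simpa only [hper] using h
    exact h1.unique (hT x t)
  have hXper : ∀ x t, A (x + L) t = A x t := by
    intro x t
    have h1 : HasDerivAt (fun x' => u (x' + L) t) (A (x + L) t) x :=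
      (hX (x + L) t).comp_add_const x L
    have h2 : HasDerivAt (fun x' => u x' t) (A (x + L) t) x := by
      simpa only [hper] using h1
    exact h2.unique (hX x t)
  -- the antiderivative of u in x (periodic!)
  have hg : ∀ t x, HasDerivAt (fun x' => B x' t - (1/6) * W t x') (u x t) x := by
    intro t x
    have h3 := (hBx x t).sub (((hWdiff t x).hasDerivAt).const_mul (1/6 : ℝ))
    have hv : fderiv ℝ (fderiv ℝ f) (x, t) (1, 0) (0, 1) - (1/6) * deriv (W t) x
        = u x t := by
      rw [← hsymm x t, hkey x t]; ring
    rw [← hv]; exact h3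
  -- the antiderivative of 2 u uₜ in x (periodic!)
  have hh : ∀ t x, HasDerivAt
      (fun x' => (B x' t - (1/6) * W t x') ^ 2 + (1/4) * u x' t ^ 4)
      (2 * u x t * B x t) x := by
    intro t x
    have h3 := ((hg t x).pow 2).add (((hX x t).pow 4).const_mul (1/4 : ℝ))
    have hv : ((2:ℕ):ℝ) * (B x t - (1/6) * W t x) ^ (2-1) * u x t
        + (1/4) * (((4:ℕ):ℝ) * u x t ^ (4-1) * A x t) = 2 * u x t * B x t := by
      simp only [hW_def]; push_cast; ring
    rw [← hv]; exact h3
  -- continuity facts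
  have hucont : Continuous (fun p : ℝ × ℝ => u p.1 p.2) := hu.continuous
  have hBcont : Continuous (fun p : ℝ × ℝ => B p.1 p.2) :=
    (ContinuousLinearMap.apply ℝ ℝ ((0:ℝ), (1:ℝ))).continuous.comp h2.continuous
  -- the integral of 2 u uₜ over a period vanishes
  have hint0 : ∀ t, (∫ x in (0:ℝ)..L, 2 * u x t * B x t) = 0 := by
    intro t
    have c1 : Continuous (fun x : ℝ => (x, t)) := continuous_id.prodMk continuous_const
    have hcont : Continuous (fun x => 2 * u x t * B x t) :=
      (continuous_const.mul (hucont.comp c1)).mul (hBcont.comp c1)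
    have hFTC := intervalIntegral.integral_eq_sub_of_hasDerivAt
      (f := fun x' => (B x' t - (1/6) * W t x') ^ 2 + (1/4) * u x' t ^ 4)
      (fun x _ => hh t x) (hcont.intervalIntegrable 0 L)
    rw [hFTC]
    have e1 : B L t = B 0 t := by simpa using hTper 0 t
    have e2 : W t L = W t 0 := by
      simp only [hW_def]
      rw [show (L:ℝ) = 0 + L from (zero_add L).symm, hper, hXper]
    have e3 : u L t = u 0 t := by
      rw [show (L:ℝ) = 0 + L from (zero_add L).symm, hper]
    simp only [e1, e2, e3, sub_self]
  -- differentiation under the integral sign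
  have hE : ∀ t₀ : ℝ, HasDerivAt (fun t => ∫ x in (0:ℝ)..L, (u x t) ^ 2) 0 t₀ := by
    intro t₀
    obtain ⟨M, hM⟩ : ∃ M, ∀ p ∈ (Set.uIcc (0:ℝ) L) ×ˢ (Metric.closedBall t₀ 1),
        ‖2 * u p.1 p.2 * B p.1 p.2‖ ≤ M :=
      ((isCompact_uIcc).prod (isCompact_closedBall t₀ 1)).exists_bound_of_continuousOn
        ((continuous_const.mul hucont).mul hBcont).continuousOn
    have key := intervalIntegral.hasDerivAt_integral_of_dominated_loc_of_deriv_le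
      (F := fun t x => (u x t) ^ 2) (F' := fun t x => 2 * u x t * B x t)
      (bound := fun _ => M) (a := 0) (b := L) (μ := volume) (x₀ := t₀) (s := ball t₀ 1) (ball_mem_nhds t₀ one_pos)
      ?_ ?_ ?_ ?_ ?_ ?_
    · have := key.2
      rwa [hint0 t₀] at this
    · filter_upwards with t
      have c1 : Continuous (fun x : ℝ => (x, t)) := continuous_id.prodMk continuous_const
      exact ((hucont.comp c1).pow 2).aestronglyMeasurable
    · have c1 : Continuous (fun x : ℝ => (x, t₀)) := continuous_id.prodMk continuous_const
      exact (((hucont.comp c1).pow 2)).intervalIntegrable 0 L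
    · have c1 : Continuous (fun x : ℝ => (x, t₀)) := continuous_id.prodMk continuous_const
      exact ((continuous_const.mul (hucont.comp c1)).mul (hBcont.comp c1)).aestronglyMeasurable
    · filter_upwards with x hx t ht
      exact hM (x, t) ⟨uIoc_subset_uIcc hx, ball_subset_closedBall ht⟩
    · exact intervalIntegrable_const
    · filter_upwards with x _ t _
      have h := (hT x t).pow 2
      have hv : ((2:ℕ):ℝ) * u x t ^ (2-1) * B x t = 2 * u x t * B x t := by
        push_cast; ring
      rw [← hv]; exact h
  intro t₁ t₂
  exact is_const_of_deriv_eq_zero (fun t => (hE t).differentiableAt)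
    (fun t => (hE t).deriv) t₁ t₂
end

section
/- Let u : ℝ × ℝ → ℝ be a smooth (C³) function, L-periodic in x for some L > 0, satisfying the short pulse equation u_{xt} = u + (1/6)(u³)_{xx} for all (x, t). Then the invariant E_1 = ∫_0^L √(1 + u_x(x, t)²) dx is independent of t. In fact, ∂_t √(1 + u_x²) = ∂_x[(u²/2)√(1 + u_x²)] pointwise. -/
open Real MeasureTheory

/-- **Conservation of `E₁ = ∫ √(1 + u_x²) dx` for the short pulse equation.**
If `u` is `C³`, `L`-periodic in `x`, and solves `u_{xt} = u + (1/6)(u³)_{xx}`,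
then `∫_0^L √(1 + u_x(x,t)²) dx` does not depend on `t`; in fact the pointwise identity
`∂_t √(1 + u_x²) = ∂_x [(u²/2)√(1 + u_x²)]` holds. -/
theorem shortPulse_E1_conserved
    (u : ℝ → ℝ → ℝ) (L : ℝ) (hL : 0 < L)
    (hu : ContDiff ℝ 3 (Function.uncurry u))
    (hper : ∀ x t : ℝ, u (x + L) t = u x t)
    (heq : ∀ x t : ℝ, deriv (fun t' => deriv (fun x' => u x' t') x) t
      = u x t + (1 / 6) * deriv (fun x' => deriv (fun x'' => (u x'' t) ^ 3) x') x) :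
    (∀ t₁ t₂ : ℝ,
      (∫ x in (0:ℝ)..L, Real.sqrt (1 + (deriv (fun x' => u x' t₁) x) ^ 2))
        = ∫ x in (0:ℝ)..L, Real.sqrt (1 + (deriv (fun x' => u x' t₂) x) ^ 2)) ∧
    (∀ x t : ℝ,
      deriv (fun t' => Real.sqrt (1 + (deriv (fun x' => u x' t') x) ^ 2)) t
        = deriv (fun x' => (u x' t) ^ 2 / 2
            * Real.sqrt (1 + (deriv (fun x'' => u x'' t) x') ^ 2)) x) := by
  -- slice derivative helper
  have slice : ∀ (F : ℝ × ℝ → ℝ), Differentiable ℝ F → ∀ x t : ℝ,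
      HasDerivAt (fun x' => F (x', t)) (fderiv ℝ F (x, t) (1, 0)) x ∧
      HasDerivAt (fun t' => F (x, t')) (fderiv ℝ F (x, t) (0, 1)) t := by
    intro F hF x t
    constructor
    · have h1 : HasDerivAt (fun x' : ℝ => (x', t)) ((1 : ℝ), (0 : ℝ)) x :=
        (hasDerivAt_id x).prodMk (hasDerivAt_const x t)
      simpa [Function.comp_def] using (hF.differentiableAt.hasFDerivAt).comp_hasDerivAt x h1
    · have h1 : HasDerivAt (fun t' : ℝ => (x, t')) ((0 : ℝ), (1 : ℝ)) t :=
        (hasDerivAt_const t x).prodMk (hasDerivAt_id t)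
      simpa [Function.comp_def] using (hF.differentiableAt.hasFDerivAt).comp_hasDerivAt t h1
  set V : ℝ × ℝ → ℝ := fun p => fderiv ℝ (Function.uncurry u) p (1, 0) with hVdef
  have hVc2 : ContDiff ℝ 2 V := (hu.fderiv_right (m := 2) (by norm_num)).clm_apply contDiff_const
  set A : ℝ × ℝ → ℝ := fun p => fderiv ℝ V p (1, 0) with hAdef
  set W : ℝ × ℝ → ℝ := fun p => fderiv ℝ V p (0, 1) with hWdef
  have hAc : Continuous A :=
    ((hVc2.fderiv_right (m := 1) (by norm_num)).clm_apply contDiff_const).continuous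
  have hWc : Continuous W :=
    ((hVc2.fderiv_right (m := 1) (by norm_num)).clm_apply contDiff_const).continuous
  have hVc : Continuous V := hVc2.continuous
  have hux : ∀ x t : ℝ, HasDerivAt (fun x' => u x' t) (V (x, t)) x := fun x t =>
    (slice _ (hu.differentiable (by norm_num)) x t).1
  have hVx : ∀ x t : ℝ, HasDerivAt (fun x' => V (x', t)) (A (x, t)) x := fun x t =>
    (slice _ (hVc2.differentiable (by norm_num)) x t).1
  have hVt : ∀ x t : ℝ, HasDerivAt (fun t' => V (x, t')) (W (x, t)) t := fun x t =>
    (slice _ (hVc2.differentiable (by norm_num)) x t).2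
  have hderiv_eq : ∀ x t : ℝ, deriv (fun x' => u x' t) x = V (x, t) := fun x t =>
    (hux x t).deriv
  -- the PDE in terms of V, W, A
  have heq' : ∀ x t : ℝ, W (x, t)
      = u x t + u x t * V (x, t) ^ 2 + u x t ^ 2 / 2 * A (x, t) := by
    intro x t
    have h1 : deriv (fun t' => deriv (fun x' => u x' t') x) t = W (x, t) := by
      have e : (fun t' => deriv (fun x' => u x' t') x) = fun t' => V (x, t') :=
        funext fun t' => (hux x t').deriv
      rw [e]; exact (hVt x t).deriv
    have h2 : (fun x' => deriv (fun x'' => u x'' t ^ 3) x')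
        = fun x' => 3 * u x' t ^ 2 * V (x', t) := by
      funext x'
      have := ((hux x' t).fun_pow 3).deriv
      rw [this]; push_cast; ring
    have h3 : HasDerivAt (fun x' => 3 * u x' t ^ 2 * V (x', t))
        (3 * (((2:ℝ) * u x t ^ 1 * V (x, t)) * V (x, t) + u x t ^ 2 * A (x, t))) x := by
      have hp : HasDerivAt (fun x' => u x' t ^ 2) ((2:ℝ) * u x t ^ 1 * V (x, t)) x := by
        simpa using (hux x t).fun_pow 2
      have this : HasDerivAt (fun x' => 3 * (u x' t ^ 2 * V (x', t))) _ x :=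
        (hp.fun_mul (hVx x t)).const_mul (3:ℝ)
      convert this using 2 <;> ring
    have h4 := heq x t
    rw [h1, h2, h3.deriv] at h4
    rw [h4]; ring
  -- derivative of sqrt(1 + V²) slices
  have hsqrt : ∀ (g : ℝ → ℝ) (g' s : ℝ), HasDerivAt g g' s →
      HasDerivAt (fun y => Real.sqrt (1 + g y ^ 2)) (g s * g' / Real.sqrt (1 + g s ^ 2)) s := by
    intro g g' s hg
    have h0 : HasDerivAt (fun y => 1 + g y ^ 2) (2 * g s * g') s := by
      simpa [mul_comm, mul_assoc] using (hg.pow 2).const_add 1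
    have h1 : HasDerivAt (fun y => Real.sqrt (1 + g y ^ 2)) _ s :=
      (Real.hasDerivAt_sqrt (x := 1 + g s ^ 2) (by positivity)).comp s h0
    convert h1 using 1
    have hS : (0:ℝ) < Real.sqrt (1 + g s ^ 2) := Real.sqrt_pos.mpr (by positivity)
    field_simp
  have hft : ∀ x t : ℝ, HasDerivAt (fun t' => Real.sqrt (1 + V (x, t') ^ 2))
      (V (x, t) * W (x, t) / Real.sqrt (1 + V (x, t) ^ 2)) t := fun x t =>
    hsqrt _ _ t (hVt x t)
  have hgx : ∀ x t : ℝ, HasDerivAt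
      (fun x' => u x' t ^ 2 / 2 * Real.sqrt (1 + V (x', t) ^ 2))
      (V (x, t) * W (x, t) / Real.sqrt (1 + V (x, t) ^ 2)) x := by
    intro x t
    have hu2 : HasDerivAt (fun x' => u x' t ^ 2 / 2) (u x t * V (x, t)) x := by
      have this : HasDerivAt (fun x' => u x' t ^ 2 / 2) _ x := ((hux x t).fun_pow 2).div_const 2
      convert this using 1; ring
    have h2 : HasDerivAt (fun x' => u x' t ^ 2 / 2 * Real.sqrt (1 + V (x', t) ^ 2)) _ x :=
      hu2.fun_mul (hsqrt _ _ x (hVx x t))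
    convert h2 using 1
    have hS : (0:ℝ) < Real.sqrt (1 + V (x, t) ^ 2) := Real.sqrt_pos.mpr (by positivity)
    have hS2 : Real.sqrt (1 + V (x, t) ^ 2) ^ 2 = 1 + V (x, t) ^ 2 :=
      Real.sq_sqrt (by positivity)
    rw [heq' x t]
    field_simp
    linear_combination (-(2:ℝ) * u x t * V (x, t)) * hS2
  constructor
  · -- conservation of the integral
    set D : ℝ × ℝ → ℝ := fun p => V p * W p / Real.sqrt (1 + V p ^ 2) with hDdef
    have hDc : Continuous D := by
      apply Continuous.div (hVc.mul hWc)
        (Real.continuous_sqrt.comp (continuous_const.add (hVc.pow 2)))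
      intro p
      have hpos : (0:ℝ) < 1 + V p ^ 2 := by positivity
      exact (Real.sqrt_pos.mpr hpos).ne'
    have hDcx : ∀ t : ℝ, Continuous fun x => D (x, t) := fun t =>
      hDc.comp (continuous_id.prodMk continuous_const)
    have hVper : ∀ t : ℝ, V (L, t) = V (0, t) := by
      intro t
      have e : (fun x' => u (x' + L) t) = fun x' => u x' t := funext fun x' => hper x' t
      have hadd : HasDerivAt (fun x' : ℝ => x' + L) 1 0 := (hasDerivAt_id 0).add_const L
      have h1 : HasDerivAt (fun x' => u (x' + L) t) (V (0 + L, t) * 1) 0 :=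
        by have := (hux (0 + L) t).comp 0 hadd; exact this
      rw [e] at h1
      have h2 := h1.unique (hux 0 t)
      simpa using h2
    have huper : ∀ t : ℝ, u L t = u 0 t := fun t => by simpa using hper 0 t
    have intD : ∀ t : ℝ, (∫ x in (0:ℝ)..L, D (x, t)) = 0 := by
      intro t
      have ftc := intervalIntegral.integral_eq_sub_of_hasDerivAt
        (f := fun x => u x t ^ 2 / 2 * Real.sqrt (1 + V (x, t) ^ 2))
        (f' := fun x => D (x, t)) (fun x _ => hgx x t) ((hDcx t).intervalIntegrable 0 L)
      rw [ftc]
      rw [huper t, hVper t, sub_self]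
    have hsc : ∀ t : ℝ, Continuous fun x => Real.sqrt (1 + V (x, t) ^ 2) := fun t =>
      Real.continuous_sqrt.comp (continuous_const.add
        ((hVc.comp (continuous_id.prodMk continuous_const)).pow 2))
    have hmain : ∀ t₀ : ℝ,
        HasDerivAt (fun t => ∫ x in (0:ℝ)..L, Real.sqrt (1 + V (x, t) ^ 2)) 0 t₀ := by
      intro t₀
      obtain ⟨C, hC⟩ := (isCompact_Icc.prod isCompact_Icc).exists_bound_of_continuousOn
        (s := Set.Icc 0 L ×ˢ Set.Icc (t₀ - 1) (t₀ + 1)) hDc.continuousOn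
      have key := intervalIntegral.hasDerivAt_integral_of_dominated_loc_of_deriv_le
        (F := fun t x => Real.sqrt (1 + V (x, t) ^ 2)) (F' := fun t x => D (x, t))
        (bound := fun _ => C) (a := 0) (b := L) (x₀ := t₀) (μ := volume) (s := Metric.ball t₀ 1) (Metric.ball_mem_nhds t₀ zero_lt_one)
        (Filter.Eventually.of_forall fun t => (hsc t).aestronglyMeasurable)
        ((hsc t₀).intervalIntegrable 0 L)
        (hDcx t₀).aestronglyMeasurable
        ?_ intervalIntegrable_const ?_
      · have h2 := key.2
        rwa [intD t₀] at h2
      · refine ae_of_all _ fun x hx t ht => ?_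
        rw [Set.uIoc_of_le hL.le] at hx
        rw [Real.ball_eq_Ioo] at ht
        exact hC (x, t) ⟨⟨hx.1.le, hx.2⟩, ⟨ht.1.le, ht.2.le⟩⟩
      · exact ae_of_all _ fun x _ t _ => hft x t
    intro t₁ t₂
    simp only [hderiv_eq]
    exact is_const_of_deriv_eq_zero (fun t => (hmain t).differentiableAt)
      (fun t => (hmain t).deriv) t₁ t₂
  · intro x t
    simp only [hderiv_eq]
    rw [(hft x t).deriv, (hgx x t).deriv]
end

section
/- Let ρ : ℝ × ℝ → ℝ and u : ℝ × ℝ → ℂ be smooth (C²) functions, L-periodic in y for some L > 0, satisfying the complex coupled dispersionless system ρ_s + (|u|²/2)_y = 0 and u_{ys} = ρu for all (y, s). Then the conserved quantity H_1 = ∫_0^L (ρ(y, s)² + |u_y(y, s)|²) dy is independent of s. In fact, ∂_s(ρ² + |u_y|²) = 0 pointwise. -/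
/-- **Conservation of `H₁ = ∫ (ρ² + |u_y|²) dy` for the complex coupled dispersionless system.**
If `ρ` (real) and `u` (complex) are `C²`, `L`-periodic-in-`y` solutions of
`ρ_s + (|u|²/2)_y = 0`, `u_{ys} = ρu`, then `∫_0^L (ρ² + |u_y|²) dy` does not depend on `s`;
in fact `∂_s(ρ² + |u_y|²) = 0` pointwise. -/
theorem complexCD_H1_conserved
    (ρ : ℝ → ℝ → ℝ) (u : ℝ → ℝ → ℂ) (L : ℝ) (hL : 0 < L)
    (hρ : ContDiff ℝ 2 (Function.uncurry ρ))
    (hu : ContDiff ℝ 2 (Function.uncurry u))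
    (hperρ : ∀ y s : ℝ, ρ (y + L) s = ρ y s)
    (hperu : ∀ y s : ℝ, u (y + L) s = u y s)
    (hCD1 : ∀ y s : ℝ,
      deriv (fun s' => ρ y s') s + deriv (fun y' => (‖u y' s‖) ^ 2 / 2) y = 0)
    (hCD2 : ∀ y s : ℝ,
      deriv (fun s' => deriv (fun y' => u y' s') y) s = (ρ y s : ℂ) * u y s) :
    (∀ s₁ s₂ : ℝ,
      (∫ y in (0:ℝ)..L, ((ρ y s₁) ^ 2 + (‖deriv (fun y' => u y' s₁) y‖) ^ 2))
        = ∫ y in (0:ℝ)..L, ((ρ y s₂) ^ 2 + (‖deriv (fun y' => u y' s₂) y‖) ^ 2)) ∧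
    (∀ y s : ℝ,
      deriv (fun s' => (ρ y s') ^ 2 + (‖deriv (fun y' => u y' s') y‖) ^ 2) s
        = 0) := by
  set f := Function.uncurry u with hf
  have hfd : Differentiable ℝ f := hu.differentiable (by norm_num)
  have hρd : Differentiable ℝ (Function.uncurry ρ) := hρ.differentiable (by norm_num)
  -- the partial derivative `u_y`
  set uY : ℝ → ℝ → ℂ := fun y s => fderiv ℝ f (y, s) (1, 0) with huY
  -- Lemma A : `u(·,s)` has derivative `uY y s` at `y`
  have hA : ∀ y s : ℝ, HasDerivAt (fun y' => u y' s) (uY y s) y := by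
    intro y s
    have hline : HasDerivAt (fun y' : ℝ => ((y' : ℝ), s)) ((1 : ℝ), (0 : ℝ)) y :=
      HasDerivAt.prodMk (hasDerivAt_id y) (hasDerivAt_const y s)
    exact (hfd (y, s)).hasFDerivAt.comp_hasDerivAt y hline
  have hderivA : ∀ y s : ℝ, deriv (fun y' => u y' s) y = uY y s := fun y s => (hA y s).deriv
  -- `uY` is jointly C¹
  have hC1 : ContDiff ℝ 1 (fun p : ℝ × ℝ => fderiv ℝ f p (1, 0)) :=
    (hu.fderiv_right (le_refl 2)).clm_apply contDiff_const
  -- `ρ(y,·)` has some derivative; combined with `hCD1` we get its value later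
  have hρs : ∀ y s : ℝ, HasDerivAt (fun s' => ρ y s')
      (deriv (fun s' => ρ y s') s) s := by
    intro y s
    have hline : HasDerivAt (fun s' : ℝ => ((y : ℝ), s')) ((0 : ℝ), (1 : ℝ)) s :=
      HasDerivAt.prodMk (hasDerivAt_const s y) (hasDerivAt_id s)
    have : HasDerivAt (fun s' => ρ y s') (fderiv ℝ (Function.uncurry ρ) (y, s) (0, 1)) s :=
      (hρd (y, s)).hasFDerivAt.comp_hasDerivAt s hline
    exact this.deriv ▸ this
  -- `uY y (·)` has derivative `ρ u` at `s` (from hCD2)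
  have hUs : ∀ y s : ℝ, HasDerivAt (fun s' => uY y s') ((ρ y s : ℂ) * u y s) s := by
    intro y s
    have hline : HasDerivAt (fun s' : ℝ => ((y : ℝ), s')) ((0 : ℝ), (1 : ℝ)) s :=
      HasDerivAt.prodMk (hasDerivAt_const s y) (hasDerivAt_id s)
    have hd : DifferentiableAt ℝ (fun s' => uY y s') s := by
      have := ((hC1.differentiable one_ne_zero) (y, s)).comp s
        (by exact hline.differentiableAt)
      exact this
    have h1 := hd.hasDerivAt
    have h2 : deriv (fun s' => uY y s') s = (ρ y s : ℂ) * u y s := by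
      have heq : (fun s' => uY y s') = fun s' => deriv (fun y' => u y' s') y :=
        funext fun s' => (hderivA y s').symm
      rw [heq]; exact hCD2 y s
    rwa [h2] at h1
  -- real and imaginary parts
  have hre : ∀ y s : ℝ, HasDerivAt (fun y' => (u y' s).re) (uY y s).re y := fun y s =>
    Complex.reCLM.hasFDerivAt.comp_hasDerivAt y (hA y s)
  have him : ∀ y s : ℝ, HasDerivAt (fun y' => (u y' s).im) (uY y s).im y := fun y s =>
    Complex.imCLM.hasFDerivAt.comp_hasDerivAt y (hA y s)
  have hreS : ∀ y s : ℝ, HasDerivAt (fun s' => (uY y s').re) ((ρ y s : ℂ) * u y s).re s :=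
    fun y s => Complex.reCLM.hasFDerivAt.comp_hasDerivAt s (hUs y s)
  have himS : ∀ y s : ℝ, HasDerivAt (fun s' => (uY y s').im) ((ρ y s : ℂ) * u y s).im s :=
    fun y s => Complex.imCLM.hasFDerivAt.comp_hasDerivAt s (hUs y s)
  -- value of the y-derivative of |u|²/2
  have habs : ∀ y s : ℝ, HasDerivAt (fun y' => (‖u y' s‖) ^ 2 / 2)
      ((u y s).re * (uY y s).re + (u y s).im * (uY y s).im) y := by
    intro y s
    have h := (((hre y s).pow 2).add ((him y s).pow 2)).div_const 2
    have heq : (fun y' => ((u y' s).re ^ 2 + (u y' s).im ^ 2) / 2)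
        = fun y' => (‖u y' s‖) ^ 2 / 2 := by
      funext y'
      rw [Complex.sq_norm, Complex.normSq_apply]; ring
    change HasDerivAt (fun y' => ((u y' s).re ^ 2 + (u y' s).im ^ 2) / 2) _ y at h
    rw [heq] at h
    convert h using 1
    ring
  -- the value of ρ_s
  have hρval : ∀ y s : ℝ, HasDerivAt (fun s' => ρ y s')
      (-((u y s).re * (uY y s).re + (u y s).im * (uY y s).im)) s := by
    intro y s
    have h := hρs y s
    have h1 := hCD1 y s
    rw [(habs y s).deriv] at h1
    have : deriv (fun s' => ρ y s') s
        = -((u y s).re * (uY y s).re + (u y s).im * (uY y s).im) := by linarith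
    rwa [this] at h
  -- pointwise conservation, in terms of `uY`
  have hpt : ∀ y s : ℝ, HasDerivAt
      (fun s' => (ρ y s') ^ 2 + (‖uY y s'‖) ^ 2) 0 s := by
    intro y s
    have h1 := (hρval y s).pow 2
    have h2 := (((hreS y s).pow 2).add ((himS y s).pow 2))
    have heq : (fun s' => (uY y s').re ^ 2 + (uY y s').im ^ 2)
        = fun s' => (‖uY y s'‖) ^ 2 := by
      funext s'
      rw [Complex.sq_norm, Complex.normSq_apply]; ring
    change HasDerivAt (fun s' => (uY y s').re ^ 2 + (uY y s').im ^ 2) _ s at h2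
    rw [heq] at h2
    change HasDerivAt (fun s' => (ρ y s') ^ 2) _ s at h1
    have h3 := h1.add h2
    change HasDerivAt (fun s' => (ρ y s') ^ 2 + (‖uY y s'‖) ^ 2) _ s at h3
    convert h3 using 1
    simp only [Complex.mul_re, Complex.mul_im, Complex.ofReal_re, Complex.ofReal_im]
    ring
  -- rewrite back to the original form
  have hFeq : ∀ y : ℝ, (fun s' => (ρ y s') ^ 2
        + (‖deriv (fun y' => u y' s') y‖) ^ 2)
      = fun s' => (ρ y s') ^ 2 + (‖uY y s'‖) ^ 2 := by
    intro y; funext s'; rw [hderivA]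
  have hpt' : ∀ y s : ℝ,
      deriv (fun s' => (ρ y s') ^ 2 + (‖deriv (fun y' => u y' s') y‖) ^ 2) s
        = 0 := by
    intro y s
    rw [hFeq y]
    exact (hpt y s).deriv
  refine ⟨?_, hpt'⟩
  intro s₁ s₂
  have hconst : ∀ y : ℝ,
      (ρ y s₁) ^ 2 + (‖deriv (fun y' => u y' s₁) y‖) ^ 2
        = (ρ y s₂) ^ 2 + (‖deriv (fun y' => u y' s₂) y‖) ^ 2 := by
    intro y
    have hdiff : Differentiable ℝ (fun s' => (ρ y s') ^ 2 + (‖uY y s'‖) ^ 2) :=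
      fun s => (hpt y s).differentiableAt
    have := is_const_of_deriv_eq_zero hdiff (fun s => (hpt y s).deriv) s₁ s₂
    simpa [hderivA] using this
  exact intervalIntegral.integral_congr fun y _ => hconst y
end

section
/- Let ρ, u : ℝ × ℝ → ℝ be smooth (C²) functions, L-periodic in y for some L > 0, satisfying the modified coupled dispersionless system ρ_s + (u²)_y = 0 and u_{ys} = (2ρ − 1)u for all (y, s). Then the conserved quantity H_0 = ∫_0^L (2ρ(y, s) − 1) u(y, s)² dy is independent of s. In fact, ∂_s((2ρ − 1)u²) = ∂_y(u_s² − u⁴) pointwise. -/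
open Function MeasureTheory intervalIntegral
open Function

private lemma MCD.slice1 {F : ℝ × ℝ → ℝ} (hF : Differentiable ℝ F) (y s : ℝ) :
    HasDerivAt (fun y' => F (y', s)) (fderiv ℝ F (y, s) (1, 0)) y := by
  have h := (hF (y, s)).hasFDerivAt.comp_hasDerivAt y
    ((hasDerivAt_id y).prodMk (hasDerivAt_const y s))
  simp at h
  exact h

private lemma MCD.slice2 {F : ℝ × ℝ → ℝ} (hF : Differentiable ℝ F) (y s : ℝ) :
    HasDerivAt (fun s' => F (y, s')) (fderiv ℝ F (y, s) (0, 1)) s := by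
  have h := (hF (y, s)).hasFDerivAt.comp_hasDerivAt s
    ((hasDerivAt_const s y).prodMk (hasDerivAt_id s))
  exact h

private lemma MCD.contApp {F : ℝ × ℝ → ℝ} (hF : ContDiff ℝ 2 F) (v : ℝ × ℝ) :
    Continuous (fun p : ℝ × ℝ => fderiv ℝ F p v) :=
  (ContinuousLinearMap.apply ℝ ℝ v).continuous.comp
    ((hF.fderiv_right ((by norm_num : (1:WithTop ℕ∞) + 1 ≤ 2))).continuous)

private lemma MCD.sliceD1 {F : ℝ × ℝ → ℝ} (hF : ContDiff ℝ 2 F) (v : ℝ × ℝ) (y s : ℝ) :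
    HasDerivAt (fun y' => fderiv ℝ F (y', s) v)
      (fderiv ℝ (fderiv ℝ F) (y, s) (1, 0) v) y := by
  have hd : Differentiable ℝ (fderiv ℝ F) :=
    (hF.fderiv_right ((by norm_num : (1:WithTop ℕ∞) + 1 ≤ 2))).differentiable one_ne_zero
  have h1 : HasFDerivAt (fun p => fderiv ℝ F p v)
      ((ContinuousLinearMap.apply ℝ ℝ v).comp (fderiv ℝ (fderiv ℝ F) (y, s))) (y, s) :=
    (ContinuousLinearMap.apply ℝ ℝ v).hasFDerivAt.comp _ (hd _).hasFDerivAt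
  have h := h1.comp_hasDerivAt y ((hasDerivAt_id y).prodMk (hasDerivAt_const y s))
  simp at h
  exact h

private lemma MCD.sliceD2 {F : ℝ × ℝ → ℝ} (hF : ContDiff ℝ 2 F) (v : ℝ × ℝ) (y s : ℝ) :
    HasDerivAt (fun s' => fderiv ℝ F (y, s') v)
      (fderiv ℝ (fderiv ℝ F) (y, s) (0, 1) v) s := by
  have hd : Differentiable ℝ (fderiv ℝ F) :=
    (hF.fderiv_right ((by norm_num : (1:WithTop ℕ∞) + 1 ≤ 2))).differentiable one_ne_zero
  have h1 : HasFDerivAt (fun p => fderiv ℝ F p v)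
      ((ContinuousLinearMap.apply ℝ ℝ v).comp (fderiv ℝ (fderiv ℝ F) (y, s))) (y, s) :=
    (ContinuousLinearMap.apply ℝ ℝ v).hasFDerivAt.comp _ (hd _).hasFDerivAt
  have h := h1.comp_hasDerivAt s ((hasDerivAt_const s y).prodMk (hasDerivAt_id s))
  simp at h
  exact h


/-- **Conservation of `H₀ = ∫ (2ρ-1)u² dy` for the modified coupled dispersionless system.**
If `(ρ, u)` is a `C²`, `L`-periodic-in-`y` solution of `ρ_s + (u²)_y = 0`,
`u_{ys} = (2ρ - 1)u`, then `∫_0^L (2ρ-1)u² dy` does not depend on `s`; in fact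
`∂_s((2ρ-1)u²) = ∂_y(u_s² - u⁴)` pointwise. -/
theorem MCD_H0_conserved
    (ρ u : ℝ → ℝ → ℝ) (L : ℝ) (hL : 0 < L)
    (hρ : ContDiff ℝ 2 (Function.uncurry ρ))
    (hu : ContDiff ℝ 2 (Function.uncurry u))
    (hperρ : ∀ y s : ℝ, ρ (y + L) s = ρ y s)
    (hperu : ∀ y s : ℝ, u (y + L) s = u y s)
    (hMCD1 : ∀ y s : ℝ, deriv (fun s' => ρ y s') s + deriv (fun y' => (u y' s) ^ 2) y = 0)
    (hMCD2 : ∀ y s : ℝ, deriv (fun s' => deriv (fun y' => u y' s') y) s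
      = (2 * ρ y s - 1) * u y s) :
    (∀ s₁ s₂ : ℝ,
      (∫ y in (0:ℝ)..L, (2 * ρ y s₁ - 1) * (u y s₁) ^ 2)
        = ∫ y in (0:ℝ)..L, (2 * ρ y s₂ - 1) * (u y s₂) ^ 2) ∧
    (∀ y s : ℝ,
      deriv (fun s' => (2 * ρ y s' - 1) * (u y s') ^ 2) s
        = deriv (fun y' => (deriv (fun s' => u y' s') s) ^ 2 - (u y' s) ^ 4) y) := by
  have hFd : Differentiable ℝ (Function.uncurry u) := hu.differentiable (by norm_num)
  have hGd : Differentiable ℝ (Function.uncurry ρ) := hρ.differentiable (by norm_num)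
  have hFd2 : Differentiable ℝ (fderiv ℝ (Function.uncurry u)) :=
    (hu.fderiv_right (by norm_num : (1:WithTop ℕ∞) + 1 ≤ 2)).differentiable one_ne_zero
  -- Clairaut symmetry
  have hsymm : ∀ p : ℝ × ℝ,
      fderiv ℝ (fderiv ℝ (Function.uncurry u)) p (1, 0) (0, 1)
        = fderiv ℝ (fderiv ℝ (Function.uncurry u)) p (0, 1) (1, 0) :=
    fun p => second_derivative_symmetric (fun q => (hFd q).hasFDerivAt)
      ((hFd2 p).hasFDerivAt) _ _
  -- translate MCD2
  have hB21 : ∀ y s, fderiv ℝ (fderiv ℝ (Function.uncurry u)) (y, s) (0, 1) (1, 0)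
      = (2 * ρ y s - 1) * u y s := by
    intro y s
    have h := hMCD2 y s
    have e : (fun s' => deriv (fun y' => u y' s') y)
        = fun s' => fderiv ℝ (Function.uncurry u) (y, s') (1, 0) :=
      funext fun s' => (MCD.slice1 hFd y s').deriv
    have hd : deriv (fun s' => fderiv ℝ (Function.uncurry u) (y, s') (1, 0)) s
        = fderiv ℝ (fderiv ℝ (Function.uncurry u)) (y, s) (0, 1) (1, 0) :=
      (MCD.sliceD2 hu (1, 0) y s).deriv
    rw [e, hd] at h
    exact h
  -- translate MCD1
  have hρs1 : ∀ y s, fderiv ℝ (Function.uncurry ρ) (y, s) (0, 1)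
      = -(2 * u y s * fderiv ℝ (Function.uncurry u) (y, s) (1, 0)) := by
    intro y s
    have h := hMCD1 y s
    have h1 : deriv (fun s' => ρ y s') s = fderiv ℝ (Function.uncurry ρ) (y, s) (0, 1) :=
      (MCD.slice2 hGd y s).deriv
    have h2 : HasDerivAt (fun y' => (u y' s) ^ 2)
        (((2 : ℕ) : ℝ) * u y s ^ (2 - 1) * fderiv ℝ (Function.uncurry u) (y, s) (1, 0)) y :=
      (MCD.slice1 hFd y s).pow 2
    have e : (((2 : ℕ) : ℝ) * u y s ^ (2 - 1) * fderiv ℝ (Function.uncurry u) (y, s) (1, 0))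
        = 2 * u y s * fderiv ℝ (Function.uncurry u) (y, s) (1, 0) := by
      norm_num
    rw [e] at h2
    rw [h1, h2.deriv] at h
    linarith
  -- derivative in s of the density
  have hfs : ∀ y s, HasDerivAt (fun s' => (2 * ρ y s' - 1) * (u y s') ^ 2)
      (2 * fderiv ℝ (Function.uncurry ρ) (y, s) (0, 1) * (u y s) ^ 2
        + (2 * ρ y s - 1) * (2 * u y s * fderiv ℝ (Function.uncurry u) (y, s) (0, 1))) s := by
    intro y s
    have hA : HasDerivAt (fun s' => 2 * ρ y s' - 1)
        (2 * fderiv ℝ (Function.uncurry ρ) (y, s) (0, 1)) s :=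
      ((MCD.slice2 hGd y s).const_mul 2).sub_const 1
    have hB : HasDerivAt (fun s' => (u y s') ^ 2)
        (((2 : ℕ) : ℝ) * u y s ^ (2 - 1) * fderiv ℝ (Function.uncurry u) (y, s) (0, 1)) s :=
      (MCD.slice2 hFd y s).pow 2
    have e : (((2 : ℕ) : ℝ) * u y s ^ (2 - 1) * fderiv ℝ (Function.uncurry u) (y, s) (0, 1))
        = 2 * u y s * fderiv ℝ (Function.uncurry u) (y, s) (0, 1) := by norm_num
    rw [e] at hB
    exact hA.mul hB
  -- derivative in y of the flux
  have hg : ∀ y s, HasDerivAt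
      (fun y' => (fderiv ℝ (Function.uncurry u) (y', s) (0, 1)) ^ 2 - (u y' s) ^ 4)
      (2 * fderiv ℝ (Function.uncurry ρ) (y, s) (0, 1) * (u y s) ^ 2
        + (2 * ρ y s - 1) * (2 * u y s * fderiv ℝ (Function.uncurry u) (y, s) (0, 1))) y := by
    intro y s
    have h1 : HasDerivAt (fun y' => (fderiv ℝ (Function.uncurry u) (y', s) (0, 1)) ^ 2)
        (((2 : ℕ) : ℝ) * (fderiv ℝ (Function.uncurry u) (y, s) (0, 1)) ^ (2 - 1)
          * fderiv ℝ (fderiv ℝ (Function.uncurry u)) (y, s) (1, 0) (0, 1)) y :=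
      (MCD.sliceD1 hu (0, 1) y s).pow 2
    have h2 : HasDerivAt (fun y' => (u y' s) ^ 4)
        (((4 : ℕ) : ℝ) * u y s ^ (4 - 1) * fderiv ℝ (Function.uncurry u) (y, s) (1, 0)) y :=
      (MCD.slice1 hFd y s).pow 4
    have h3 := h1.sub h2
    refine h3.congr_deriv ?_
    rw [hsymm, hB21, hρs1]
    norm_num
    ring
  -- the pointwise identity (second conjunct)
  have hpt : ∀ y s : ℝ,
      deriv (fun s' => (2 * ρ y s' - 1) * (u y s') ^ 2) s
        = deriv (fun y' => (deriv (fun s' => u y' s') s) ^ 2 - (u y' s) ^ 4) y := by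
    intro y s
    have e : (fun y' => (deriv (fun s' => u y' s') s) ^ 2 - (u y' s) ^ 4)
        = fun y' => (fderiv ℝ (Function.uncurry u) (y', s) (0, 1)) ^ 2 - (u y' s) ^ 4 := by
      funext y'
      have hd : deriv (fun s' => u y' s') s = fderiv ℝ (Function.uncurry u) (y', s) (0, 1) :=
        (MCD.slice2 hFd y' s).deriv
      rw [hd]
    rw [(hfs y s).deriv, e, (hg y s).deriv]
  refine ⟨?_, hpt⟩
  -- the flux integrand
  have hφc : Continuous (fun p : ℝ × ℝ =>
      2 * fderiv ℝ (Function.uncurry ρ) p (0, 1) * (Function.uncurry u p) ^ 2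
        + (2 * Function.uncurry ρ p - 1)
          * (2 * Function.uncurry u p * fderiv ℝ (Function.uncurry u) p (0, 1))) := by
    have c1 : Continuous fun p : ℝ × ℝ => fderiv ℝ (Function.uncurry ρ) p (0, 1) :=
      MCD.contApp hρ _
    have c2 : Continuous fun p : ℝ × ℝ => fderiv ℝ (Function.uncurry u) p (0, 1) :=
      MCD.contApp hu _
    have cu : Continuous (Function.uncurry u) := hu.continuous
    have cρ : Continuous (Function.uncurry ρ) := hρ.continuous
    exact ((continuous_const.mul c1).mul (cu.pow 2)).add
      (((continuous_const.mul cρ).sub continuous_const).mul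
        ((continuous_const.mul cu).mul c2))
  have hφslice : ∀ s : ℝ, Continuous fun y =>
      2 * fderiv ℝ (Function.uncurry ρ) (y, s) (0, 1) * (u y s) ^ 2
        + (2 * ρ y s - 1) * (2 * u y s * fderiv ℝ (Function.uncurry u) (y, s) (0, 1)) :=
    fun s => hφc.comp (continuous_id.prodMk continuous_const)
  have hfc : ∀ s : ℝ, Continuous fun y => (2 * ρ y s - 1) * (u y s) ^ 2 := by
    intro s
    have cu : Continuous fun y : ℝ => u y s :=
      hu.continuous.comp (continuous_id.prodMk continuous_const)
    have cρ : Continuous fun y : ℝ => ρ y s :=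
      hρ.continuous.comp (continuous_id.prodMk continuous_const)
    exact ((continuous_const.mul cρ).sub continuous_const).mul (cu.pow 2)
  -- the spatial integral of the flux derivative vanishes
  have hint : ∀ s : ℝ, (∫ y in (0:ℝ)..L,
      (2 * fderiv ℝ (Function.uncurry ρ) (y, s) (0, 1) * (u y s) ^ 2
        + (2 * ρ y s - 1) * (2 * u y s * fderiv ℝ (Function.uncurry u) (y, s) (0, 1)))) = 0 := by
    intro s
    rw [intervalIntegral.integral_eq_sub_of_hasDerivAt (fun y _ => hg y s)
      ((hφslice s).intervalIntegrable 0 L)]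
    have hu0 : u L s = u 0 s := by have := hperu 0 s; rwa [zero_add] at this
    have hus0 : fderiv ℝ (Function.uncurry u) (L, s) (0, 1)
        = fderiv ℝ (Function.uncurry u) (0, s) (0, 1) := by
      have e : (fun s' => u L s') = fun s' => u 0 s' := by
        funext s'; have := hperu 0 s'; rwa [zero_add] at this
      calc fderiv ℝ (Function.uncurry u) (L, s) (0, 1) = deriv (fun s' => u L s') s :=
            ((MCD.slice2 hFd L s).deriv).symm
        _ = deriv (fun s' => u 0 s') s := by rw [e]
        _ = fderiv ℝ (Function.uncurry u) (0, s) (0, 1) := (MCD.slice2 hFd 0 s).deriv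
    show fderiv ℝ (Function.uncurry u) (L, s) (0, 1) ^ 2 - u L s ^ 4
        - (fderiv ℝ (Function.uncurry u) (0, s) (0, 1) ^ 2 - u 0 s ^ 4) = 0
    rw [hu0, hus0]
    ring
  -- differentiate under the integral sign
  have hH : ∀ s₀ : ℝ, HasDerivAt
      (fun s => ∫ y in (0:ℝ)..L, (2 * ρ y s - 1) * (u y s) ^ 2) 0 s₀ := by
    intro s₀
    obtain ⟨C, hC⟩ := ((isCompact_uIcc (a := (0:ℝ)) (b := L)).prod
      (isCompact_closedBall s₀ 1)).exists_bound_of_continuousOn hφc.continuousOn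
    have main := intervalIntegral.hasDerivAt_integral_of_dominated_loc_of_deriv_le
      (F := fun s y => (2 * ρ y s - 1) * (u y s) ^ 2)
      (F' := fun s y =>
        2 * fderiv ℝ (Function.uncurry ρ) (y, s) (0, 1) * (u y s) ^ 2
          + (2 * ρ y s - 1) * (2 * u y s * fderiv ℝ (Function.uncurry u) (y, s) (0, 1)))
      (x₀ := s₀) (a := (0:ℝ)) (b := L) (bound := fun _ => C) (μ := volume)
      (Metric.ball_mem_nhds s₀ one_pos)
      (Filter.Eventually.of_forall fun s => (hfc s).aestronglyMeasurable)
      ((hfc s₀).intervalIntegrable 0 L)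
      ((hφslice s₀).aestronglyMeasurable)
      (Filter.Eventually.of_forall fun y hy => fun x hx =>
        hC (y, x) ⟨Set.uIoc_subset_uIcc hy, Metric.ball_subset_closedBall hx⟩)
      intervalIntegrable_const
      (Filter.Eventually.of_forall fun y hy => fun x hx => hfs y x)
    have h2 := main.2
    rwa [hint s₀] at h2
  intro s₁ s₂
  exact is_const_of_deriv_eq_zero
    (fun s => (hH s).differentiableAt) (fun s => (hH s).deriv) s₁ s₂
end

section
/- Let ρ, u, v : ℝ × ℝ → ℝ be smooth (C²) functions, L-periodic in y for some L > 0, satisfying the coupled CD system ρ_s + (uv/2)_y = 0, u_{ys} = ρu, and v_{ys} = ρv for all (y, s). Then the conserved quantity H_1 = ∫_0^L (ρ(y, s)² + u_y(y, s) v_y(y, s)) dy is independent of s. In fact, ∂_s(ρ² + u_y v_y) = 0 pointwise. -/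
open Function

lemma pd_y {f : ℝ → ℝ → ℝ} (hf : Differentiable ℝ (uncurry f)) (y s : ℝ) :
    HasDerivAt (fun y' => f y' s) (fderiv ℝ (uncurry f) (y, s) (1, 0)) y := by
  have h1 : HasFDerivAt (fun y' : ℝ => (y', s))
      ((ContinuousLinearMap.id ℝ ℝ).prod 0) y :=
    (hasFDerivAt_id y).prodMk (hasFDerivAt_const s y)
  have h3 := ((hf (y, s)).hasFDerivAt).comp y h1
  exact h3.hasDerivAt

lemma diff_Dy {f : ℝ → ℝ → ℝ} (hf : ContDiff ℝ 2 (uncurry f)) (y : ℝ) :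
    Differentiable ℝ (fun s => fderiv ℝ (uncurry f) (y, s) ((1:ℝ), (0:ℝ))) := by
  have h1 : ContDiff ℝ 1 (fderiv ℝ (uncurry f)) := hf.fderiv_right (by norm_num)
  have h2 : Differentiable ℝ (fun p : ℝ × ℝ => fderiv ℝ (uncurry f) p ((1:ℝ),(0:ℝ))) :=
    ((ContinuousLinearMap.apply ℝ ℝ ((1:ℝ),(0:ℝ))).contDiff.comp h1).differentiable one_ne_zero
  exact h2.comp ((differentiable_const y).prodMk differentiable_id)

lemma Afun_eq {f : ℝ → ℝ → ℝ} (hf : ContDiff ℝ 2 (uncurry f)) (y : ℝ) :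
    (fun s => deriv (fun y' => f y' s) y)
      = fun s => fderiv ℝ (uncurry f) (y, s) (1, 0) := by
  funext s
  exact (pd_y (hf.differentiable two_ne_zero) y s).deriv

lemma diff_A {f : ℝ → ℝ → ℝ} (hf : ContDiff ℝ 2 (uncurry f)) (y : ℝ) :
    Differentiable ℝ (fun s => deriv (fun y' => f y' s) y) := by
  rw [Afun_eq hf y]; exact diff_Dy hf y

lemma diff_fs {f : ℝ → ℝ → ℝ} (hf : ContDiff ℝ 2 (uncurry f)) (y : ℝ) :
    Differentiable ℝ (fun s => f y s) :=
  (hf.differentiable two_ne_zero).comp ((differentiable_const y).prodMk differentiable_id)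

lemma coupledCD_pointwise
    (ρ u v : ℝ → ℝ → ℝ)
    (hρ : ContDiff ℝ 2 (Function.uncurry ρ))
    (hu : ContDiff ℝ 2 (Function.uncurry u))
    (hv : ContDiff ℝ 2 (Function.uncurry v))
    (hCD1 : ∀ y s : ℝ,
      deriv (fun s' => ρ y s') s + deriv (fun y' => u y' s * v y' s / 2) y = 0)
    (hCD2 : ∀ y s : ℝ, deriv (fun s' => deriv (fun y' => u y' s') y) s = ρ y s * u y s)
    (hCD3 : ∀ y s : ℝ, deriv (fun s' => deriv (fun y' => v y' s') y) s = ρ y s * v y s)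
    (y s : ℝ) :
    deriv (fun s' =>
        (ρ y s') ^ 2 + deriv (fun y' => u y' s') y * deriv (fun y' => v y' s') y) s = 0 := by
  set du := deriv (fun y' => u y' s) y with hdu
  set dv := deriv (fun y' => v y' s) y with hdv
  set ρs := deriv (fun s' => ρ y s') s with hρs
  -- derivatives in s
  have Pρ : HasDerivAt (fun s' => ρ y s') ρs s := (diff_fs hρ y s).hasDerivAt
  have PA : HasDerivAt (fun s' => deriv (fun y' => u y' s') y) (ρ y s * u y s) s := by
    have := (diff_A hu y s).hasDerivAt
    rwa [hCD2 y s] at this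
  have PB : HasDerivAt (fun s' => deriv (fun y' => v y' s') y) (ρ y s * v y s) s := by
    have := (diff_A hv y s).hasDerivAt
    rwa [hCD3 y s] at this
  have PF : HasDerivAt (fun s' =>
      (ρ y s') ^ 2 + deriv (fun y' => u y' s') y * deriv (fun y' => v y' s') y) _ s :=
    (Pρ.pow 2).add (PA.mul PB)
  -- value of the y-derivative of uv/2
  have Puy : HasDerivAt (fun y' => u y' s) du y :=
    ((pd_y (hu.differentiable two_ne_zero) y s).differentiableAt).hasDerivAt
  have Pvy : HasDerivAt (fun y' => v y' s) dv y :=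
    ((pd_y (hv.differentiable two_ne_zero) y s).differentiableAt).hasDerivAt
  have hprod : deriv (fun y' => u y' s * v y' s / 2) y
      = (du * v y s + u y s * dv) / 2 := ((Puy.mul Pvy).div_const 2).deriv
  have hρs_val : ρs = -((du * v y s + u y s * dv) / 2) := by
    have := hCD1 y s
    rw [hprod] at this
    linarith
  rw [PF.deriv, hρs_val]
  ring

/-- **Conservation of `H₁ = ∫ (ρ² + u_y v_y) dy` for the coupled CD system.**
If `(ρ, u, v)` is a `C²`, `L`-periodic-in-`y` solution of `ρ_s + (uv/2)_y = 0`,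
`u_{ys} = ρu`, `v_{ys} = ρv`, then `∫_0^L (ρ² + u_y v_y) dy` does not depend on `s`;
in fact `∂_s(ρ² + u_y v_y) = 0` pointwise. -/
theorem coupledCD_H1_conserved
    (ρ u v : ℝ → ℝ → ℝ) (L : ℝ) (hL : 0 < L)
    (hρ : ContDiff ℝ 2 (Function.uncurry ρ))
    (hu : ContDiff ℝ 2 (Function.uncurry u))
    (hv : ContDiff ℝ 2 (Function.uncurry v))
    (hperρ : ∀ y s : ℝ, ρ (y + L) s = ρ y s)
    (hperu : ∀ y s : ℝ, u (y + L) s = u y s)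
    (hperv : ∀ y s : ℝ, v (y + L) s = v y s)
    (hCD1 : ∀ y s : ℝ,
      deriv (fun s' => ρ y s') s + deriv (fun y' => u y' s * v y' s / 2) y = 0)
    (hCD2 : ∀ y s : ℝ, deriv (fun s' => deriv (fun y' => u y' s') y) s = ρ y s * u y s)
    (hCD3 : ∀ y s : ℝ, deriv (fun s' => deriv (fun y' => v y' s') y) s = ρ y s * v y s) :
    (∀ s₁ s₂ : ℝ,
      (∫ y in (0:ℝ)..L,
          ((ρ y s₁) ^ 2 + deriv (fun y' => u y' s₁) y * deriv (fun y' => v y' s₁) y))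
        = ∫ y in (0:ℝ)..L,
            ((ρ y s₂) ^ 2 + deriv (fun y' => u y' s₂) y * deriv (fun y' => v y' s₂) y)) ∧
    (∀ y s : ℝ,
      deriv (fun s' =>
        (ρ y s') ^ 2 + deriv (fun y' => u y' s') y * deriv (fun y' => v y' s') y) s = 0) := by
  have key := coupledCD_pointwise ρ u v hρ hu hv hCD1 hCD2 hCD3
  refine ⟨fun s₁ s₂ => ?_, key⟩
  have hconst : ∀ y s₁ s₂ : ℝ,
      (ρ y s₁) ^ 2 + deriv (fun y' => u y' s₁) y * deriv (fun y' => v y' s₁) y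
        = (ρ y s₂) ^ 2 + deriv (fun y' => u y' s₂) y * deriv (fun y' => v y' s₂) y := by
    intro y s₁ s₂
    have hdiff : Differentiable ℝ (fun s' =>
        (ρ y s') ^ 2 + deriv (fun y' => u y' s') y * deriv (fun y' => v y' s') y) :=
      (((diff_fs hρ y).pow 2).add ((diff_A hu y).mul (diff_A hv y)))
    exact is_const_of_deriv_eq_zero hdiff (key y) s₁ s₂
  have : (fun y => (ρ y s₁) ^ 2 + deriv (fun y' => u y' s₁) y * deriv (fun y' => v y' s₁) y)
      = fun y => (ρ y s₂) ^ 2 + deriv (fun y' => u y' s₂) y * deriv (fun y' => v y' s₂) y :=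
    funext fun y => hconst y s₁ s₂
  rw [this]
end
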